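/- Any map sgn : (ℤ^n)^(n+1) → ℤ/2ℤ that is multilinear, symmetric, and satisfies sgn(l₁,l₁,l₂,…,lₙ) ≡ det(l₁,…,lₙ) (mod 2) for all lᵢ ∈ ℤ^n, is invariant under the diagonal action of GLₙ(ℤ): for every A ∈ GLₙ(ℤ), sgn(A·l₁,…,A·l_{n+1}) = sgn(l₁,…,l_{n+1}). -/

import Mathlib

section Aux

variable {n : ℕ} (hn : 1 ≤ n)
    (s : (Fin (n + 1) → (Fin n → ℤ)) → ZMod 2)
    (hadd : ∀ (v : Fin (n + 1) → Fin n → ℤ) (i : Fin (n + 1)) (x y : Fin n → ℤ),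
      s (Function.update v i (x + y)) =
        s (Function.update v i x) + s (Function.update v i y))
    (hsym : ∀ (v : Fin (n + 1) → Fin n → ℤ) (σ : Equiv.Perm (Fin (n + 1))),
      s (v ∘ σ) = s v)
    (hdet : ∀ l : Fin n → (Fin n → ℤ),
      s (Fin.cons (l ⟨0, hn⟩) l) = (((Matrix.of fun i j => l j i).det : ℤ) : ZMod 2))

include hadd in
lemma aux_zero (v : Fin (n + 1) → Fin n → ℤ) (i : Fin (n + 1)) :
    s (Function.update v i 0) = 0 := by
  have h := hadd v i 0 0
  rw [add_zero] at h
  exact (left_eq_add.mp h)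

include hadd in
lemma aux_sum {α : Type*} [DecidableEq α] (v : Fin (n + 1) → Fin n → ℤ) (i : Fin (n + 1))
    (K : Finset α) (x : α → (Fin n → ℤ)) :
    s (Function.update v i (∑ k ∈ K, x k)) = ∑ k ∈ K, s (Function.update v i (x k)) := by
  classical
  induction K using Finset.induction_on with
  | empty => simpa using aux_zero s hadd v i
  | insert _ _ hk ih =>
      rw [Finset.sum_insert hk, Finset.sum_insert hk, hadd, ih]

include hadd in
lemma aux_two_smul (v : Fin (n + 1) → Fin n → ℤ) (i : Fin (n + 1)) (w : Fin n → ℤ) :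
    s (Function.update v i (2 • w)) = 0 := by
  rw [two_smul, hadd]
  exact CharTwo.add_self_eq_zero _

include hn hsym hdet in
lemma aux_hdet_gen (l : Fin n → (Fin n → ℤ)) (j : Fin n) :
    s (Fin.cons (l j) l) = (((Matrix.of fun i j => l j i).det : ℤ) : ZMod 2) := by
  set τ : Equiv.Perm (Fin n) := Equiv.swap ⟨0, hn⟩ j with hτ
  have h1 := hdet (l ∘ τ)
  have hτ0 : (l ∘ τ) ⟨0, hn⟩ = l j := by simp [hτ, Equiv.swap_apply_left]
  -- permutation of Fin (n+1) fixing 0 and acting as τ on tails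
  set π : Equiv.Perm (Fin (n + 1)) :=
    Equiv.permCongr (finSuccEquiv n).symm (Equiv.optionCongr τ) with hπ
  have hcomp : (Fin.cons (l j) l : Fin (n + 1) → Fin n → ℤ) ∘ π
      = Fin.cons (l j) (l ∘ τ) := by
    funext m
    induction m using Fin.cases with
    | zero =>
        simp [hπ, Equiv.permCongr_apply, Fin.cons_zero]
    | succ m =>
        simp [hπ, Equiv.permCongr_apply, finSuccEquiv_symm_some, Fin.cons_succ]
  have h2 : s (Fin.cons (l j) l) = s (Fin.cons (l j) (l ∘ τ)) := by
    rw [← hcomp, hsym]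
  rw [hτ0] at h1
  rw [h2, h1]
  -- determinants: column permutation changes sign only
  have hdetperm : (Matrix.of fun i m => (l ∘ τ) m i).det
      = Equiv.Perm.sign τ • (Matrix.of fun i m => l m i).det := by
    have := Matrix.det_permute' τ (Matrix.of fun i m => l m i)
    rw [Units.smul_def, smul_eq_mul]; exact this.trans (by simp)
  rw [hdetperm]
  rcases Int.units_eq_one_or (Equiv.Perm.sign τ) with h | h <;> rw [h]
  · simp
  · simp [Units.smul_def, CharTwo.neg_eq]

include hn hsym hdet in
lemma aux_repeat (v : Fin (n + 1) → Fin n → ℤ) (k₀ k : Fin (n + 1)) (hk : k ≠ k₀) :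
    s (Function.update v k₀ (v k)) =
      (((Matrix.of fun i j => v (k₀.succAbove j) i).det : ℤ) : ZMod 2) := by
  obtain ⟨j₀, hj₀⟩ := Fin.exists_succAbove_eq hk
  set l : Fin n → Fin n → ℤ := fun j => v (k₀.succAbove j) with hl
  set σ : Equiv.Perm (Fin (n + 1)) :=
    (finSuccEquiv' k₀).trans (finSuccEquiv n).symm with hσ
  have hcomp : (Fin.cons (l j₀) l : Fin (n + 1) → Fin n → ℤ) ∘ σ
      = Function.update v k₀ (v k) := by
    funext m
    by_cases hm : m = k₀
    · subst hm
      simp [hσ, finSuccEquiv'_at, Fin.cons_zero, hl, hj₀]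
    · obtain ⟨j, hj⟩ := Fin.exists_succAbove_eq hm
      subst hj
      simp only [hσ, Equiv.trans_apply, finSuccEquiv'_succAbove, finSuccEquiv_symm_some,
        Fin.cons_succ, Function.comp_apply]
      rw [Function.update_of_ne hm]
  rw [← hcomp, hsym]
  exact aux_hdet_gen hn s hsym hdet l j₀

include hn hadd hsym hdet in
lemma aux_value (v : Fin (n + 1) → Fin n → ℤ) (K : Finset (Fin (n + 1))) (k₀ : Fin (n + 1))
    (hk₀ : k₀ ∈ K) (w : Fin n → ℤ) (hw : ∑ k ∈ K, v k = 2 • w) :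
    s v = (K.erase k₀).card •
      (((Matrix.of fun i j => v (k₀.succAbove j) i).det : ℤ) : ZMod 2) := by
  have h1 : s (Function.update v k₀ (v k₀)) +
      s (Function.update v k₀ (∑ k ∈ K.erase k₀, v k)) = 0 := by
    rw [← hadd, Finset.add_sum_erase _ _ hk₀, hw]
    exact aux_two_smul s hadd v k₀ w
  rw [Function.update_eq_self] at h1
  rw [aux_sum s hadd] at h1
  have h2 : ∀ k ∈ K.erase k₀, s (Function.update v k₀ (v k)) =
      (((Matrix.of fun i j => v (k₀.succAbove j) i).det : ℤ) : ZMod 2) := by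
    intro k hk
    exact aux_repeat hn s hsym hdet v k₀ k (Finset.ne_of_mem_erase hk)
  rw [Finset.sum_congr rfl h2, Finset.sum_const] at h1
  have := neg_eq_of_add_eq_zero_left h1
  rw [← this, CharTwo.neg_eq]

end Aux

/-- Any map `sgn : (ℤ^n)^(n+1) → ℤ/2ℤ` that is multilinear (additive in each
argument), symmetric, and satisfies `sgn(l₁,l₁,l₂,…,lₙ) ≡ det(l₁,…,lₙ) (mod 2)`, is invariant
under the diagonal action of `GLₙ(ℤ)`. -/
theorem stmt1 (n : ℕ) (hn : 1 ≤ n)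
    (s : (Fin (n + 1) → (Fin n → ℤ)) → ZMod 2)
    (hadd : ∀ (v : Fin (n + 1) → Fin n → ℤ) (i : Fin (n + 1)) (x y : Fin n → ℤ),
      s (Function.update v i (x + y)) =
        s (Function.update v i x) + s (Function.update v i y))
    (hsym : ∀ (v : Fin (n + 1) → Fin n → ℤ) (σ : Equiv.Perm (Fin (n + 1))),
      s (v ∘ σ) = s v)
    (hdet : ∀ l : Fin n → (Fin n → ℤ),
      s (Fin.cons (l ⟨0, hn⟩) l) = (((Matrix.of fun i j => l j i).det : ℤ) : ZMod 2)) :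
    ∀ (A : GL (Fin n) ℤ) (v : Fin (n + 1) → Fin n → ℤ),
      s (fun i => (A : Matrix (Fin n) (Fin n) ℤ).mulVec (v i)) = s v := by
  intro A v
  classical
  -- reductions mod 2 are linearly dependent
  set vbar : Fin (n + 1) → (Fin n → ZMod 2) := fun k j => ((v k j : ℤ) : ZMod 2) with hvbar
  have hnotli : ¬ LinearIndependent (ZMod 2) vbar := by
    intro h
    have hcard := h.fintype_card_le_finrank
    simp [Module.finrank_pi] at hcard
  obtain ⟨g, hg0, i₀, hgi₀⟩ := Fintype.not_linearIndependent_iff.mp hnotli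
  set K : Finset (Fin (n + 1)) := Finset.univ.filter (fun k => g k ≠ 0) with hK
  have hk₀ : i₀ ∈ K := by simp [hK, hgi₀]
  have hone : ∀ a : ZMod 2, a ≠ 0 → a = 1 := by decide
  have hsumbar : ∑ k ∈ K, vbar k = 0 := by
    rw [← hg0, hK, Finset.sum_filter]
    refine Finset.sum_congr rfl fun k _ => ?_
    by_cases h : g k = 0
    · simp [h]
    · simp [h, hone _ h]
  -- the integer sum over K is even in each coordinate
  have hdvd : ∀ j, (2 : ℤ) ∣ ∑ k ∈ K, v k j := by
    intro j
    have : ((∑ k ∈ K, v k j : ℤ) : ZMod 2) = 0 := by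
      push_cast
      have := congrFun hsumbar j
      simpa [hvbar] using this
    exact (ZMod.intCast_zmod_eq_zero_iff_dvd _ 2).mp this
  set w : Fin n → ℤ := fun j => (∑ k ∈ K, v k j) / 2 with hwdef
  have hw : ∑ k ∈ K, v k = 2 • w := by
    funext j
    simp only [Finset.sum_apply, Pi.smul_apply, smul_eq_mul]
    exact (Int.mul_ediv_cancel' (hdvd j)).symm
  -- same relation for the transformed vectors
  set u : Fin (n + 1) → Fin n → ℤ := fun i => (A : Matrix (Fin n) (Fin n) ℤ).mulVec (v i)
    with hu
  have hwu : ∑ k ∈ K, u k = 2 • ((A : Matrix (Fin n) (Fin n) ℤ).mulVec w) := by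
    have h' : ∑ k ∈ K, u k = (A : Matrix (Fin n) (Fin n) ℤ).mulVecLin (∑ k ∈ K, v k) := by
      rw [map_sum]
      simp [hu, Matrix.mulVecLin_apply]
    rw [h', hw, map_nsmul, Matrix.mulVecLin_apply]
  have h1 := aux_value hn s hadd hsym hdet v K i₀ hk₀ w hw
  have h2 := aux_value hn s hadd hsym hdet u K i₀ hk₀ _ hwu
  rw [h1, h2]
  congr 1
  -- determinants agree mod 2
  have hmat : (Matrix.of fun i j => u (i₀.succAbove j) i)
      = (A : Matrix (Fin n) (Fin n) ℤ) * (Matrix.of fun i j => v (i₀.succAbove j) i) := by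
    ext i j
    simp [hu, Matrix.mul_apply, Matrix.mulVec, dotProduct]
  rw [hmat, Matrix.det_mul]
  have hunit : IsUnit ((A : Matrix (Fin n) (Fin n) ℤ).det) := by
    exact (Matrix.isUnit_iff_isUnit_det _).mp A.isUnit
  rcases Int.isUnit_iff.mp hunit with h | h <;> rw [h] <;> push_cast
  · ring
  · rw [CharTwo.neg_eq]; ring
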